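/- With pivot derivations v_n as above, for all n ≥ 1 and j ≥ 0 the action on the variable t_j is: v_n(t_j) = t_{n−1} t_n ⋯ t_{j−2} if n < j; v_n(t_j) = 1 if n = j; and v_n(t_j) = 0 if n > j. -/

import Mathlib

open MvPolynomial

private lemma pivot_dvd (K : Type*) [Field K]
    (v : ℕ → Derivation K (MvPolynomial ℕ K) (MvPolynomial ℕ K))
    (hv : ∀ i, 1 ≤ i → ∀ j : ℕ,
      v i (X j) = (if i = j then 1 else 0) + X (i - 1) * v (i + 1) (X j)) :
    ∀ m n j : ℕ, 1 ≤ n → j < n → ∃ q, v n (X j) = X (n - 1 + m) * q := by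
  intro m
  induction m with
  | zero =>
    intro n j hn hj
    refine ⟨v (n + 1) (X j), ?_⟩
    rw [hv n hn j, if_neg (by omega)]
    ring
  | succ m ih =>
    intro n j hn hj
    obtain ⟨q, hq⟩ := ih (n + 1) j (by omega) (by omega)
    refine ⟨X (n - 1) * q, ?_⟩
    rw [hv n hn j, if_neg (by omega), hq]
    have : n + 1 - 1 + m = n - 1 + (m + 1) := by omega
    rw [this]; ring

private lemma pivot_gt_zero (K : Type*) [Field K]
    (v : ℕ → Derivation K (MvPolynomial ℕ K) (MvPolynomial ℕ K))
    (hv : ∀ i, 1 ≤ i → ∀ j : ℕ,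
      v i (X j) = (if i = j then 1 else 0) + X (i - 1) * v (i + 1) (X j)) :
    ∀ n j : ℕ, 1 ≤ n → j < n → v n (X j) = 0 := by
  classical
  intro n j hn hj
  ext d
  set m : ℕ := d.support.sup id + 1 + n with hm
  obtain ⟨q, hq⟩ := pivot_dvd K v hv m n j hn hj
  have hk : n - 1 + m ∉ d.support := by
    intro h
    have := Finset.le_sup (f := id) h
    simp only [id] at this
    omega
  rw [hq, coeff_zero, MvPolynomial.coeff_X_mul', if_neg hk]

private lemma pivot_eq_one (K : Type*) [Field K]
    (v : ℕ → Derivation K (MvPolynomial ℕ K) (MvPolynomial ℕ K))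
    (hv : ∀ i, 1 ≤ i → ∀ j : ℕ,
      v i (X j) = (if i = j then 1 else 0) + X (i - 1) * v (i + 1) (X j)) :
    ∀ n : ℕ, 1 ≤ n → v n (X n) = 1 := by
  intro n hn
  rw [hv n hn n, if_pos rfl,
    pivot_gt_zero K v hv (n + 1) n (by omega) (by omega)]
  ring

private lemma pivot_lt (K : Type*) [Field K]
    (v : ℕ → Derivation K (MvPolynomial ℕ K) (MvPolynomial ℕ K))
    (hv : ∀ i, 1 ≤ i → ∀ j : ℕ,
      v i (X j) = (if i = j then 1 else 0) + X (i - 1) * v (i + 1) (X j)) :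
    ∀ d n : ℕ, 1 ≤ n →
      v n (X (n + d + 1)) = ∏ k ∈ Finset.Ico (n - 1) (n + d), X k := by
  intro d
  induction d with
  | zero =>
    intro n hn
    rw [hv n hn (n + 0 + 1), if_neg (by omega),
      show n + 0 + 1 = n + 1 by ring, pivot_eq_one K v hv (n + 1) (by omega)]
    rw [show n + 0 = (n - 1) + 1 by omega, Finset.prod_Ico_succ_top (by omega),
      Finset.Ico_self, Finset.prod_empty]
    ring
  | succ d ih =>
    intro n hn
    rw [hv n hn (n + (d + 1) + 1), if_neg (by omega),
      show n + (d + 1) + 1 = (n + 1) + d + 1 by ring, ih (n + 1) (by omega)]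
    rw [Finset.prod_eq_prod_Ico_succ_bot (a := n - 1) (b := n + (d + 1)) (by omega)]
    have h1 : n - 1 + 1 = n := by omega
    have h2 : n + 1 - 1 = n := by omega
    have h3 : n + 1 + d = n + (d + 1) := by omega
    rw [h1, h2, h3]
    ring

/-- The action of the pivot special derivations `v_n = ∂_n + t_{n−1} v_{n+1}` on the
variables: `v_n(t_j) = t_{n−1}⋯t_{j−2}` if `n < j`, `1` if `n = j`, `0` if `n > j`. -/
theorem pivot_action_on_variables (K : Type*) [Field K]
    (v : ℕ → Derivation K (MvPolynomial ℕ K) (MvPolynomial ℕ K))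
    (hv : ∀ i, 1 ≤ i → ∀ j : ℕ,
      v i (X j) = (if i = j then 1 else 0) + X (i - 1) * v (i + 1) (X j)) :
    ∀ n, 1 ≤ n → ∀ j : ℕ,
      v n (X j) =
        if n < j then ∏ k ∈ Finset.Ico (n - 1) (j - 1), X k
        else if n = j then 1 else 0 := by
  intro n hn j
  rcases lt_trichotomy n j with h | h | h
  · rw [if_pos h]
    obtain ⟨d, rfl⟩ : ∃ d, j = n + d + 1 := ⟨j - n - 1, by omega⟩
    rw [pivot_lt K v hv d n hn, show n + d + 1 - 1 = n + d by omega]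
  · rw [if_neg (by omega), if_pos h, h, pivot_eq_one K v hv j (by omega)]
  · rw [if_neg (by omega), if_neg (by omega), pivot_gt_zero K v hv n j hn h]
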